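/- If for all w in the null space of A we have ||x_K + w_K||_1 + (1/C)||w_{K̄}||_1 ≥ ||x_K||_1, then for any solution x̂ of the ℓ1 minimization problem (i.e., Ax̂ = Ax and ||x̂||_1 ≤ ||x||_1), it holds that ||(x - x̂)_{K̄}||_1 ≤ (2C/(C-1))||x_{K̄}||_1. -/

import Mathlib

open Finset

theorem stmt_0 {m n : ℕ} (A : Matrix (Fin m) (Fin n) ℝ) (x : Fin n → ℝ)
    (K : Finset (Fin n)) (C : ℝ) (hC : 1 < C)
    (hns : ∀ w : Fin n → ℝ, A.mulVec w = 0 →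
      ∑ i ∈ K, |x i + w i| + (1 / C) * ∑ i ∈ Kᶜ, |w i| ≥ ∑ i ∈ K, |x i|)
    (xh : Fin n → ℝ) (hAx : A.mulVec xh = A.mulVec x)
    (hl1 : ∑ i, |xh i| ≤ ∑ i, |x i|) :
    ∑ i ∈ Kᶜ, |x i - xh i| ≤ (2 * C / (C - 1)) * ∑ i ∈ Kᶜ, |x i| := by
  have hC0 : (0:ℝ) < C := by linarith
  have hC1 : (0:ℝ) < C - 1 := by linarith
  have hAw : A.mulVec (fun i => xh i - x i) = 0 := by
    have : (fun i => xh i - x i) = xh - x := rfl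
    rw [this, Matrix.mulVec_sub, hAx, sub_self]
  have h1 := hns _ hAw
  simp only [add_sub_cancel] at h1
  have habs : ∀ i, |xh i - x i| = |x i - xh i| := fun i => abs_sub_comm _ _
  simp only [habs] at h1
  have hsplit : ∀ v : Fin n → ℝ, ∑ i, |v i| = ∑ i ∈ K, |v i| + ∑ i ∈ Kᶜ, |v i| :=
    fun v => (Finset.sum_add_sum_compl K _).symm
  rw [hsplit xh, hsplit x] at hl1
  have htri : ∑ i ∈ Kᶜ, |x i - xh i| ≤ ∑ i ∈ Kᶜ, |xh i| + ∑ i ∈ Kᶜ, |x i| := by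
    rw [← Finset.sum_add_distrib]
    apply Finset.sum_le_sum
    intro i _
    have := abs_add_le (x i) (-xh i)
    simp only [abs_neg] at this
    calc |x i - xh i| = |x i + -xh i| := by ring_nf
      _ ≤ |x i| + |xh i| := this
      _ = |xh i| + |x i| := by ring
  set S := ∑ i ∈ Kᶜ, |x i - xh i|
  set a := ∑ i ∈ K, |x i|
  set b := ∑ i ∈ K, |xh i|
  set c := ∑ i ∈ Kᶜ, |x i|
  set d := ∑ i ∈ Kᶜ, |xh i|
  -- h1 : b + (1/C) * S ≥ a, hl1 : b + d ≤ a + c, htri : S ≤ d + c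
  rw [div_mul_eq_mul_div, le_div_iff₀ hC1]
  have h2 : C * a ≤ C * b + S := by
    have := mul_le_mul_of_nonneg_left h1 (le_of_lt hC0)
    calc C * a ≤ C * (b + 1/C * S) := by nlinarith
      _ = C * b + S := by field_simp
  nlinarith
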